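/- Let (M, g) be a hypersurface isometrically immersed in a Riemannian manifold (N, ḡ) carrying a concurrent vector field W (i.e. ∇̄W = Id), and suppose the tangential part W^⊤ makes (M, g, W^⊤, λ) a second Ricci soliton and the shape operator is parallel (∇A_{W^⊥} = 0). Then (M, g) is Ricci flat if and only if A_{W^⊥}² = −2 A_{W^⊥} + ((λ − 4)/4) Id, i.e. (M, g) is a metallic shaped hypersurface with parameters r = −2 and s = (λ − 4)/4. -/

import Mathlib

/-!
STATEMENT 6. Let `(M, g)` be a hypersurface isometrically immersed in a
Riemannian manifold `(N, ḡ)` carrying a concurrent vector field `W`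
(`∇̄W = Id`), and suppose the tangential part `W^⊤` makes `(M, g, W^⊤, λ)` a
second Ricci soliton (`𝓛_{W^⊤}𝓛_{W^⊤}g + Ric = λ g`) and the shape operator
is parallel (`∇A_{W^⊥} = 0`).  Then `(M, g)` is Ricci flat if and only if
`A_{W^⊥}² = −2 A_{W^⊥} + ((λ − 4)/4) Id`, i.e. `(M, g)` is a metallic shaped
hypersurface with parameters `r = −2` and `s = (λ − 4)/4`.

For the tangential part `W^⊤` of a concurrent field one has, for tangent `U, V`:
`(𝓛_{W^⊤}𝓛_{W^⊤}g)(U, V) = 2(2 g(U,V) + 4 g(A_{W^⊥}U, V) + 2 g(A_{W^⊥}²U, V)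
  + g((∇_{W^⊤}A_{W^⊥})U, V))`.
The formalization is intrinsic on the hypersurface `M`: the shape operator
`A = A_{W^⊥}`, its covariant derivative `∇_{W^⊤}A_{W^⊥}` and the tensor
`LL = 𝓛_{W^⊤}𝓛_{W^⊤}g` are data constrained by this identity.
-/

open Manifold

noncomputable section

theorem hypersurface_second_soliton_parallel_shape_ricci_flat_iff_metallic
    {E : Type*} [NormedAddCommGroup E] [NormedSpace ℝ E]
    {H : Type*} [TopologicalSpace H] {I : ModelWithCorners ℝ E H}
    {M : Type*} [TopologicalSpace M] [ChartedSpace H M]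
    [IsManifold I (⊤ : ℕ∞) M]
    -- the induced metric `g` (symmetric, bilinear, nondegenerate),
    -- the Ricci curvature `Ric` of `g`, the tensor `LL = 𝓛_{W^⊤}𝓛_{W^⊤}g`
    (g Ric LL : ∀ x : M, TangentSpace I x → TangentSpace I x → ℝ)
    (hg_symm : ∀ (x : M) (u v : TangentSpace I x), g x u v = g x v u)
    (hg_add : ∀ (x : M) (u u' v : TangentSpace I x),
      g x (u + u') v = g x u v + g x u' v)
    (hg_smul : ∀ (x : M) (c : ℝ) (u v : TangentSpace I x),
      g x (c • u) v = c * g x u v)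
    (hg_nondeg : ∀ (x : M) (u : TangentSpace I x),
      (∀ v : TangentSpace I x, g x u v = 0) → u = 0)
    -- the tangential part `W^⊤` of the concurrent vector field `W` on the ambient space
    (Wtop : ∀ x : M, TangentSpace I x)
    -- the shape operator `A = A_{W^⊥}` and its covariant derivative `∇_{W^⊤}A_{W^⊥}`
    (A nablaA : ∀ x : M, TangentSpace I x → TangentSpace I x)
    (lambda : ℝ)
    -- structural identity for `𝓛_{W^⊤}𝓛_{W^⊤}g` when `W` is concurrent (`∇̄W = Id`)
    (hLL : ∀ (x : M) (u v : TangentSpace I x),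
      LL x u v = 2 * (2 * g x u v + 4 * g x (A x u) v + 2 * g x (A x (A x u)) v
        + g x (nablaA x u) v))
    -- second Ricci soliton equation: `𝓛_{W^⊤}𝓛_{W^⊤}g + Ric = λ g`
    (hsoliton : ∀ (x : M) (u v : TangentSpace I x),
      LL x u v + Ric x u v = lambda * g x u v)
    -- the shape operator is parallel: `∇A_{W^⊥} = 0`
    (hparallel : ∀ (x : M) (u : TangentSpace I x), nablaA x u = 0) :
    -- `(M, g)` is Ricci flat iff `M` is metallic shaped with `r = −2`, `s = (λ−4)/4`
    (∀ (x : M) (u v : TangentSpace I x), Ric x u v = 0) ↔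
      (∀ (x : M) (u : TangentSpace I x),
        A x (A x u) = (-2 : ℝ) • A x u + ((lambda - 4) / 4) • u) := by
  classical
  have hg0 : ∀ (x : M) (v : TangentSpace I x), g x (0 : TangentSpace I x) v = 0 := by
    intro x v
    have h := hg_smul x 0 (0 : TangentSpace I x) v
    simpa using h
  have hRic : ∀ (x : M) (u v : TangentSpace I x),
      Ric x u v = lambda * g x u v - (4 * g x u v + 8 * g x (A x u) v
        + 4 * g x (A x (A x u)) v) := by
    intro x u v
    have hs := hsoliton x u v
    have hL := hLL x u v
    rw [hparallel, hg0] at hL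
    linarith
  constructor
  · intro hR x u
    have hkey : ∀ v : TangentSpace I x,
        g x (A x (A x u) + ((2 : ℝ) • A x u + (-((lambda - 4) / 4)) • u)) v = 0 := by
      intro v
      have h0 := hR x u v
      rw [hRic] at h0
      have e := hg_add x (A x (A x u)) ((2 : ℝ) • A x u + (-((lambda - 4) / 4)) • u) v
      have e2 := hg_add x ((2 : ℝ) • A x u) ((-((lambda - 4) / 4)) • u) v
      have e3 := hg_smul x 2 (A x u) v
      have e4 := hg_smul x (-((lambda - 4) / 4)) u v
      have h4 : 4 * (-((lambda - 4) / 4)) = -(lambda - 4) := by ring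
      rw [e, e2, e3, e4]
      nlinarith [h0, h4]
    have hz := hg_nondeg x _ hkey
    have : A x (A x u) = -((2 : ℝ) • A x u + (-((lambda - 4) / 4)) • u) := by
      have := add_eq_zero_iff_eq_neg.mp hz
      exact this
    rw [this]
    module
  · intro hM x u v
    rw [hRic]
    have h := hM x u
    rw [h, hg_add, hg_smul, hg_smul]
    have h4 : 4 * ((lambda - 4) / 4) = lambda - 4 := by ring
    nlinarith [h4]
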